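/- Let S be a mixed metric generator of the hypercube Q_d. Then for every index i ∈ {1, …, d}, S contains a vertex whose i-th coordinate is 0 and a vertex whose i-th coordinate is 1; equivalently, no coordinate is constant over all vertices of S. -/

import Mathlib

/-- Distance from a vertex `s` to an edge `e` (as an element of `Sym2 V`):
the minimum of the distances from `s` to the two endpoints of `e`. -/
noncomputable def edgeDist {V : Type*} (G : SimpleGraph V) (e : Sym2 V) (s : V) : ℕ :=
  Sym2.lift ⟨fun x y => min (G.dist x s) (G.dist y s), fun _ _ => min_comm _ _⟩ e

/-- `S` is a metric generator for `G`: every pair of distinct vertices is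
distinguished by some element of `S`. -/
def IsMetricGen {V : Type*} (G : SimpleGraph V) (S : Set V) : Prop :=
  ∀ u v : V, u ≠ v → ∃ s ∈ S, G.dist s u ≠ G.dist s v

/-- `S` is an edge metric generator for `G`: every pair of distinct edges is
distinguished by some element of `S`. -/
def IsEdgeMetricGen {V : Type*} (G : SimpleGraph V) (S : Set V) : Prop :=
  ∀ e₁ ∈ G.edgeSet, ∀ e₂ ∈ G.edgeSet, e₁ ≠ e₂ → ∃ s ∈ S, edgeDist G e₁ s ≠ edgeDist G e₂ s

/-- Distance from a vertex `s` to a mixed element (a vertex or an edge). -/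
noncomputable def mixedDist {V : Type*} (G : SimpleGraph V) (a : V ⊕ Sym2 V) (s : V) : ℕ :=
  Sum.elim (fun w => G.dist s w) (fun e => edgeDist G e s) a

/-- A mixed element is valid if it is a vertex, or an actual edge of `G`. -/
def IsMixedElem {V : Type*} (G : SimpleGraph V) (a : V ⊕ Sym2 V) : Prop :=
  Sum.elim (fun _ => True) (fun e => e ∈ G.edgeSet) a

/-- `S` is a mixed metric generator for `G`: every pair of distinct elements of
`V(G) ∪ E(G)` is distinguished by some element of `S`. -/
def IsMixedMetricGen {V : Type*} (G : SimpleGraph V) (S : Set V) : Prop :=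
  ∀ a b : V ⊕ Sym2 V, IsMixedElem G a → IsMixedElem G b → a ≠ b →
    ∃ s ∈ S, mixedDist G a s ≠ mixedDist G b s

/-- The metric dimension: minimum cardinality of a metric generator. -/
noncomputable def metricDim {V : Type*} [Fintype V] (G : SimpleGraph V) : ℕ :=
  sInf {n | ∃ S : Finset V, S.card = n ∧ IsMetricGen G ↑S}

/-- The edge metric dimension: minimum cardinality of an edge metric generator. -/
noncomputable def edgeMetricDim {V : Type*} [Fintype V] (G : SimpleGraph V) : ℕ :=
  sInf {n | ∃ S : Finset V, S.card = n ∧ IsEdgeMetricGen G ↑S}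

/-- The mixed metric dimension: minimum cardinality of a mixed metric generator. -/
noncomputable def mixedMetricDim {V : Type*} [Fintype V] (G : SimpleGraph V) : ℕ :=
  sInf {n | ∃ S : Finset V, S.card = n ∧ IsMixedMetricGen G ↑S}

/-- The hypercube `Q_d`: vertices are binary vectors of length `d`, with two
vertices adjacent iff they differ in exactly one coordinate. -/
def cube (d : ℕ) : SimpleGraph (Fin d → Bool) where
  Adj u v := hammingDist u v = 1
  symm := ⟨fun u v h => by simp only [hammingDist_comm] at h ⊢; exact h⟩
  loopless := ⟨fun u h => by simp only [hammingDist_self] at h; exact one_ne_zero h.symm⟩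

lemma hamming_update_eq {d : ℕ} (x s : Fin d → Bool) (i : Fin d) (h : x i = s i) :
    hammingDist (Function.update x i (!x i)) s = hammingDist x s + 1 := by
  unfold hammingDist
  have hset : Finset.filter (fun j => Function.update x i (!x i) j ≠ s j) Finset.univ
      = insert i (Finset.filter (fun j => x j ≠ s j) Finset.univ) := by
    ext j
    by_cases hj : j = i
    · subst hj; simp [h]
    · simp [Function.update_of_ne hj, hj]
  rw [hset, Finset.card_insert_of_notMem (by simp [h])]

lemma hamming_update_adj {d : ℕ} (x : Fin d → Bool) (i : Fin d) :
    hammingDist x (Function.update x i (!x i)) = 1 := by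
  unfold hammingDist
  have hset : Finset.filter (fun j => x j ≠ Function.update x i (!x i) j) Finset.univ
      = {i} := by
    ext j
    by_cases hj : j = i
    · subst hj; simp
    · simp [Function.update_of_ne hj, hj]
  rw [hset, Finset.card_singleton]

lemma cube_walk {d : ℕ} : ∀ n (u v : Fin d → Bool), hammingDist u v = n →
    ∃ p : (cube d).Walk u v, p.length = n := by
  intro n
  induction n with
  | zero =>
    intro u v h
    obtain rfl := eq_of_hammingDist_eq_zero h
    exact ⟨.nil, rfl⟩
  | succ n ih =>
    intro u v h
    have hne : u ≠ v := by
      rintro rfl; rw [hammingDist_self] at h; omega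
    obtain ⟨i, hi⟩ : ∃ i, u i ≠ v i := by
      by_contra hc; push_neg at hc; exact hne (funext hc)
    have hadj : (cube d).Adj u (Function.update u i (!u i)) := by
      show hammingDist _ _ = 1
      exact hamming_update_adj u i
    have hv : v i = !u i := by
      cases hu : u i <;> cases hv : v i <;> simp_all
    have h2 : hammingDist (Function.update u i (!u i)) v = n := by
      unfold hammingDist at h ⊢
      have hset : Finset.filter (fun j => Function.update u i (!u i) j ≠ v j) Finset.univ
          = (Finset.filter (fun j => u j ≠ v j) Finset.univ).erase i := by
        ext j
        by_cases hj : j = i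
        · subst hj; simp [hv]
        · simp [Function.update_of_ne hj, hj]
      rw [hset, Finset.card_erase_of_mem (by simp [hi]), h]
      rfl
    obtain ⟨p, hp⟩ := ih _ v h2
    exact ⟨.cons hadj p, by simp [hp]⟩

lemma hamming_le_walk {d : ℕ} {u v : Fin d → Bool} (p : (cube d).Walk u v) :
    hammingDist u v ≤ p.length := by
  induction p with
  | nil => simp
  | @cons a b c h p ih =>
    have h1 : hammingDist a b = 1 := h
    calc hammingDist a c ≤ hammingDist a b + hammingDist b c := hammingDist_triangle _ _ _
    _ ≤ 1 + p.length := by omega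
    _ = (SimpleGraph.Walk.cons h p).length := by simp [Nat.add_comm]

lemma cube_dist {d : ℕ} (u v : Fin d → Bool) :
    (cube d).dist u v = hammingDist u v := by
  obtain ⟨p, hp⟩ := cube_walk (hammingDist u v) u v rfl
  refine le_antisymm (hp ▸ SimpleGraph.dist_le p) ?_
  obtain ⟨q, hq⟩ := SimpleGraph.Reachable.exists_walk_length_eq_dist ⟨p⟩
  rw [← hq]
  exact hamming_le_walk q

lemma key {d : ℕ} (S : Set (Fin d → Bool)) (hS : IsMixedMetricGen (cube d) S)
    (i : Fin d) (c : Bool) (hall : ∀ s ∈ S, s i = c) : False := by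
  set x : Fin d → Bool := fun _ => c with hx
  set y := Function.update x i (!x i) with hy
  have hadj : (cube d).Adj x y := hamming_update_adj x i
  obtain ⟨s, hs, hne⟩ := hS (.inl x) (.inr s(x, y))
    trivial hadj (by simp)
  apply hne
  have hxs : x i = s i := by rw [hall s hs]
  have hdy : hammingDist y s = hammingDist x s + 1 := hamming_update_eq x s i hxs
  simp only [mixedDist, Sum.elim_inl, Sum.elim_inr, edgeDist, Sym2.lift_mk]
  rw [cube_dist, cube_dist, cube_dist, hdy, hammingDist_comm s x]
  omega

/-- If `S` is a mixed metric generator of `Q_d` then no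
coordinate is constant over `S`: for every index `i`, `S` contains a vertex
whose `i`-th coordinate is `0` and a vertex whose `i`-th coordinate is `1`. -/
theorem stmt16 (d : ℕ) (S : Set (Fin d → Bool))
    (hS : IsMixedMetricGen (cube d) S) (i : Fin d) :
    (∃ a ∈ S, a i = false) ∧ (∃ b ∈ S, b i = true) := by
  constructor
  · by_contra h
    push_neg at h
    exact key S hS i true (fun s hs => by simpa using h s hs)
  · by_contra h
    push_neg at h
    exact key S hS i false (fun s hs => by simpa using h s hs)
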